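/- Let x₁, …, x_n ∈ ℝ^p, β ∈ ℝ^p, σ > 0, n ≥ 1, and define for t = (t₁, …, t_n) ∈ ℝⁿ the map IFσ(t) = (2(1+τ)^{5/2}/(n(2+τ²))) Σ_{i=1}^n { (t_i − x_iᵀβ)² − σ² } exp( −τ (t_i − x_iᵀβ)² / (2σ²) ) + 2τ(1+τ)²/(2+τ²). If τ > 0 then IFσ is a bounded function of t on ℝⁿ; if τ = 0 then IFσ is unbounded on ℝⁿ. -/

import Mathlib

open Matrix Real

lemma xexp_le_one' {x : ℝ} (_hx : 0 ≤ x) : x * Real.exp (-x) ≤ 1 := by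
  have h := Real.add_one_le_exp x
  have hpos := Real.exp_pos x
  rw [Real.exp_neg, ← div_eq_mul_inv, div_le_one hpos]
  linarith

lemma aux_bound (σ τ : ℝ) (hσ : 0 < σ) (hτ : 0 < τ) (d : ℝ) :
    |(d ^ 2 - σ ^ 2) * Real.exp (-(τ * d ^ 2) / (2 * σ ^ 2))| ≤ 2 * σ ^ 2 / τ + σ ^ 2 := by
  have hσ2 : (0:ℝ) < 2 * σ ^ 2 := by positivity
  have hxnn : 0 ≤ τ * d ^ 2 / (2 * σ ^ 2) := by positivity
  have hE1 : Real.exp (-(τ * d ^ 2) / (2 * σ ^ 2)) ≤ 1 := by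
    rw [Real.exp_le_one_iff]
    have : (0:ℝ) ≤ τ * d ^ 2 / (2 * σ ^ 2) := hxnn
    rw [neg_div]; linarith
  have hEpos : 0 < Real.exp (-(τ * d ^ 2) / (2 * σ ^ 2)) := Real.exp_pos _
  have key : d ^ 2 * Real.exp (-(τ * d ^ 2) / (2 * σ ^ 2)) ≤ 2 * σ ^ 2 / τ := by
    have h1 : (τ * d ^ 2 / (2 * σ ^ 2)) * Real.exp (-(τ * d ^ 2 / (2 * σ ^ 2))) ≤ 1 :=
      xexp_le_one' hxnn
    have h2 : -(τ * d ^ 2) / (2 * σ ^ 2) = -(τ * d ^ 2 / (2 * σ ^ 2)) := by ring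
    rw [h2]
    have h4 : (0:ℝ) ≤ 2 * σ ^ 2 / τ := by positivity
    have h5 := mul_le_mul_of_nonneg_left h1 h4
    calc d ^ 2 * Real.exp (-(τ * d ^ 2 / (2 * σ ^ 2)))
        = (2 * σ ^ 2 / τ) * ((τ * d ^ 2 / (2 * σ ^ 2)) * Real.exp (-(τ * d ^ 2 / (2 * σ ^ 2)))) := by
          field_simp
      _ ≤ (2 * σ ^ 2 / τ) * 1 := h5
      _ = 2 * σ ^ 2 / τ := mul_one _
  rw [abs_mul, abs_of_pos hEpos]
  calc |d ^ 2 - σ ^ 2| * Real.exp (-(τ * d ^ 2) / (2 * σ ^ 2))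
      ≤ (d ^ 2 + σ ^ 2) * Real.exp (-(τ * d ^ 2) / (2 * σ ^ 2)) := by
        refine mul_le_mul_of_nonneg_right ?_ hEpos.le
        rw [abs_le]; constructor <;> nlinarith [sq_nonneg d, sq_nonneg σ]
    _ = d ^ 2 * Real.exp (-(τ * d ^ 2) / (2 * σ ^ 2))
        + σ ^ 2 * Real.exp (-(τ * d ^ 2) / (2 * σ ^ 2)) := by ring
    _ ≤ 2 * σ ^ 2 / τ + σ ^ 2 := by
        have : σ ^ 2 * Real.exp (-(τ * d ^ 2) / (2 * σ ^ 2)) ≤ σ ^ 2 * 1 :=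
          mul_le_mul_of_nonneg_left hE1 (sq_nonneg σ)
        linarith

/-- the influence function of the MDPDE of the error variance,
`IFσ(t) = (2(1+τ)^{5/2}/(n(2+τ²))) Σᵢ {(tᵢ − xᵢᵀβ)² − σ²} exp(−τ(tᵢ − xᵢᵀβ)²/(2σ²))
          + 2τ(1+τ)²/(2+τ²)`,
is bounded in `t` when `τ > 0` and unbounded when `τ = 0`. -/
theorem mdpde_variance_IF_boundedness
    {n p : ℕ} (hn : 1 ≤ n)
    (x : Fin n → Fin p → ℝ) (β : Fin p → ℝ) (σ τ : ℝ)
    (hσ : 0 < σ) (hτ : 0 ≤ τ) :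
    let IFσ : (Fin n → ℝ) → ℝ := fun t =>
      (2 * (1 + τ) ^ ((5 : ℝ) / 2) / (n * (2 + τ ^ 2))) *
        ∑ i, ((t i - x i ⬝ᵥ β) ^ 2 - σ ^ 2) *
          Real.exp (-(τ * (t i - x i ⬝ᵥ β) ^ 2) / (2 * σ ^ 2))
      + 2 * τ * (1 + τ) ^ 2 / (2 + τ ^ 2)
    ((0 < τ → ∃ C : ℝ, ∀ t : Fin n → ℝ, |IFσ t| ≤ C) ∧
      (τ = 0 → ∀ C : ℝ, ∃ t : Fin n → ℝ, C < |IFσ t|)) := by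
  intro IFσ
  constructor
  · intro hτ'
    set A := 2 * (1 + τ) ^ ((5 : ℝ) / 2) / (n * (2 + τ ^ 2)) with hA
    set B := 2 * τ * (1 + τ) ^ 2 / (2 + τ ^ 2) with hB
    refine ⟨|A| * (n * (2 * σ ^ 2 / τ + σ ^ 2)) + |B|, fun t => ?_⟩
    have hsum : |∑ i, ((t i - x i ⬝ᵥ β) ^ 2 - σ ^ 2) *
          Real.exp (-(τ * (t i - x i ⬝ᵥ β) ^ 2) / (2 * σ ^ 2))|
        ≤ n * (2 * σ ^ 2 / τ + σ ^ 2) := by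
      calc |∑ i, ((t i - x i ⬝ᵥ β) ^ 2 - σ ^ 2) *
            Real.exp (-(τ * (t i - x i ⬝ᵥ β) ^ 2) / (2 * σ ^ 2))|
          ≤ ∑ i, |((t i - x i ⬝ᵥ β) ^ 2 - σ ^ 2) *
            Real.exp (-(τ * (t i - x i ⬝ᵥ β) ^ 2) / (2 * σ ^ 2))| :=
          Finset.abs_sum_le_sum_abs _ _
        _ ≤ ∑ _i : Fin n, (2 * σ ^ 2 / τ + σ ^ 2) :=
          Finset.sum_le_sum fun i _ => aux_bound σ τ hσ hτ' _
        _ = n * (2 * σ ^ 2 / τ + σ ^ 2) := by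
          simp only [Finset.sum_const, Finset.card_univ, Fintype.card_fin, nsmul_eq_mul]
    calc |IFσ t| ≤ |A * ∑ i, ((t i - x i ⬝ᵥ β) ^ 2 - σ ^ 2) *
            Real.exp (-(τ * (t i - x i ⬝ᵥ β) ^ 2) / (2 * σ ^ 2))| + |B| := abs_add_le _ _
      _ ≤ |A| * (n * (2 * σ ^ 2 / τ + σ ^ 2)) + |B| := by
          rw [abs_mul]
          exact add_le_add (mul_le_mul_of_nonneg_left hsum (abs_nonneg A)) le_rfl
  · intro hτ0 C
    subst hτ0
    have hnR : (0:ℝ) < n := by exact_mod_cast hn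
    set s : ℝ := Real.sqrt (max C 0 + σ ^ 2 + 1) with hs
    have hs2 : s ^ 2 = max C 0 + σ ^ 2 + 1 := by
      rw [hs, sq_sqrt]; positivity
    refine ⟨fun i => x i ⬝ᵥ β + s, ?_⟩
    have hval : IFσ (fun i => x i ⬝ᵥ β + s) = max C 0 + 1 := by
      show (2 * (1 + 0) ^ ((5 : ℝ) / 2) / (n * (2 + 0 ^ 2))) *
          ∑ i : Fin n, (((x i ⬝ᵥ β + s) - x i ⬝ᵥ β) ^ 2 - σ ^ 2) *
            Real.exp (-(0 * ((x i ⬝ᵥ β + s) - x i ⬝ᵥ β) ^ 2) / (2 * σ ^ 2))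
          + 2 * 0 * (1 + 0) ^ 2 / (2 + 0 ^ 2) = max C 0 + 1
      simp only [add_sub_cancel_left, zero_mul, neg_zero, zero_div, Real.exp_zero,
        mul_one, add_zero, mul_zero, zero_pow, Finset.sum_const, Finset.card_univ,
        Fintype.card_fin, nsmul_eq_mul]
      rw [hs2]
      norm_num [Real.one_rpow]
      field_simp
      ring
    rw [hval]
    have : C < max C 0 + 1 := lt_of_le_of_lt (le_max_left C 0) (by linarith)
    calc C < max C 0 + 1 := this
      _ ≤ |max C 0 + 1| := le_abs_self _
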